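/- Assume there is a constant J ∈ [0,∞) with ‖ξ(t)‖₋ ≤ J e^{−2Bt} for all t ∈ [0,∞). Let f₀ ∈ F, set F# := ‖f₀‖ + NJ, and suppose 4KN·F# ≤ 1. Then VP(f₀) has a global solution φ : [0,∞) → F and ‖φ(t)‖ ≤ F#·𝒳(4KN·F#)·e^{−Bt} for all t ∈ [0,∞), where 𝒳 : [0,1] → [1,2] is defined by 𝒳(z) := (1 − √(1−z))/(z/2) for z ∈ (0,1] and 𝒳(0) := 1. -/

import Mathlib

set_option maxHeartbeats 2000000


open Set MeasureTheory

/-- Global existence with exponentially decaying forcing (zero approximate solution):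
if `‖ξ(t)‖₋ ≤ J e^{−2Bt}`, `F# = ‖f₀‖ + NJ` and `4KN F# ≤ 1`, then `VP(f₀)` has a global
solution `φ` with `‖φ(t)‖ ≤ F# 𝒳(4KN F#) e^{−Bt}`. -/
theorem stmt_8
    {F Fm : Type*}
    [NormedAddCommGroup F] [NormedSpace ℝ F] [CompleteSpace F]
    [NormedAddCommGroup Fm] [NormedSpace ℝ Fm] [CompleteSpace Fm]
    -- F is a dense subspace of Fm, with continuous inclusion ι
    (ι : F →L[ℝ] Fm) (hι_inj : Function.Injective ι) (hι_dense : DenseRange ι)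
    -- the semigroup (e^{tA})_{t ≥ 0} on Fm, strongly continuous
    (U : ℝ → Fm →L[ℝ] Fm)
    (hU0 : U 0 = ContinuousLinearMap.id ℝ Fm)
    (hUsem : ∀ s ≥ (0:ℝ), ∀ t ≥ (0:ℝ), U (s + t) = (U s).comp (U t))
    (hUsc : ∀ f : Fm, ContinuousOn (fun t => U t f) (Ici (0:ℝ)))
    -- e^{tA} maps F into F (lift V), giving a strongly continuous semigroup on F
    (V : ℝ → F → F)
    (hV : ∀ t ≥ (0:ℝ), ∀ x : F, ι (V t x) = U t (ι x))
    (hVcont : ContinuousOn (fun p : F × ℝ => V p.2 p.1) (univ ×ˢ Ici (0:ℝ)))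
    -- e^{tA} maps Fm into F for t > 0 (lift W), continuously on Fm × (0,∞)
    (W : ℝ → Fm → F)
    (hW : ∀ t > (0:ℝ), ∀ f : Fm, ι (W t f) = U t f)
    (hWcont : ContinuousOn (fun p : Fm × ℝ => W p.2 p.1) (univ ×ˢ Ioi (0:ℝ)))
    -- the continuous bilinear map 𝒫 with constant K, and the forcing ξ
    (PP : F →L[ℝ] F →L[ℝ] Fm) (K : ℝ) (hK : 0 < K)
    (hPP : ∀ f g : F, ‖PP f g‖ ≤ K * ‖f‖ * ‖g‖)
    (ξ : ℝ → Fm)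
    (hξ : ∀ C : Set ℝ, IsCompact C → C ⊆ Ici (0:ℝ) →
      ∃ M : ℝ, ∀ t ∈ C, ∀ t' ∈ C, ‖ξ t - ξ t'‖ ≤ M * |t - t'|)
    -- constants B, N and the exponential semigroup estimators (P4'), (P5')
    (B N : ℝ) (hB : 0 ≤ B) (hN : 0 < N)
    (hu_bd : ∀ t ≥ (0:ℝ), ∀ x : F, ‖V t x‖ ≤ Real.exp (-(B * t)) * ‖x‖)
    (μm : ℝ → ℝ)
    (hμm_cont : ContinuousOn μm (Ioi (0:ℝ)))
    (hμm_pos : ∀ t > (0:ℝ), 0 < μm t)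
    (hμm_bd : ∀ t > (0:ℝ), ∀ f : Fm, ‖W t f‖ ≤ μm t * Real.exp (-(B * t)) * ‖f‖)
    (σ : ℝ) (hσ : σ ∈ Ioc (0:ℝ) 1)
    (hμm_O : ∃ C : ℝ, ∃ δ > (0:ℝ), ∀ t ∈ Ioo (0:ℝ) δ, μm t ≤ C / t ^ (1 - σ))
    (hμm_N : ∀ t ≥ (0:ℝ), (∫ s in (0:ℝ)..t, μm (t - s) * Real.exp (-(B * s))) ≤ N)
    -- exponentially decaying forcing
    (J : ℝ) (hJ : 0 ≤ J)
    (hξb : ∀ t ≥ (0:ℝ), ‖ξ t‖ ≤ J * Real.exp (-(2 * B * t)))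
    -- datum, F# and the smallness condition
    (f₀ : F) (Fs : ℝ) (hFs : Fs = ‖f₀‖ + N * J)
    (hcond : 4 * K * N * Fs ≤ 1)
    -- the function 𝒳
    (XX : ℝ → ℝ)
    (hXX : ∀ z : ℝ, XX z = if z = 0 then 1 else (1 - Real.sqrt (1 - z)) / (z / 2)) :
    ∃ φ : ℝ → F, ContinuousOn φ (Ici (0:ℝ)) ∧
      (∀ t ≥ (0:ℝ), φ t = V t f₀ + ∫ s in (0:ℝ)..t, W (t - s) (PP (φ s) (φ s) + ξ s)) ∧
      ∀ t ≥ (0:ℝ), ‖φ t‖ ≤ Fs * XX (4 * K * N * Fs) * Real.exp (-(B * t)) := by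
  have hFs0 : 0 ≤ Fs := by rw [hFs]; positivity
  -- the fixed-point value R of x ↦ Fs + K N x²
  set R : ℝ := Fs * XX (4 * K * N * Fs) with hRdef
  have hRfix : Fs + K * N * R ^ 2 = R := by
    rw [hRdef]
    set z : ℝ := 4 * K * N * Fs with hzdef
    by_cases hzz : z = 0
    · have h4 : (0:ℝ) < 4 * K * N := by positivity
      have hFs00 : Fs = 0 := by
        rcases mul_eq_zero.mp hzz with h | h
        · exact absurd h (ne_of_gt h4)
        · exact h
      simp [hFs00]
    · have hzpos : 0 < z := lt_of_le_of_ne (by positivity) (Ne.symm hzz)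
      have hFspos : 0 < Fs := by nlinarith [mul_pos (mul_pos hK hN) hK]
      set w := Real.sqrt (1 - z) with hw
      have hw2 : w ^ 2 = 1 - z := Real.sq_sqrt (by linarith)
      have hw0 : 0 ≤ w := Real.sqrt_nonneg _
      have hXXz : XX z = (1 - w) / (z / 2) := by rw [hXX]; exact if_neg hzz
      rw [hXXz]
      have hRe : Fs * ((1 - w) / (z / 2)) = (1 - w) / (2 * (K * N)) := by
        rw [hzdef]; field_simp; ring
      rw [hRe]
      field_simp
      nlinarith [hw2, hzdef]
  have hR0 : 0 ≤ R := by nlinarith [mul_nonneg (mul_pos hK hN).le (sq_nonneg R)]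
  -- the sequence of norm bounds
  let a : ℕ → ℝ := fun n => Nat.rec 0 (fun _ x => Fs + K * N * x ^ 2) n
  have ha0 : a 0 = 0 := rfl
  have haS : ∀ n, a (n + 1) = Fs + K * N * (a n) ^ 2 := fun n => rfl
  have ha_nonneg : ∀ n, 0 ≤ a n := by
    intro n; induction n with
    | zero => simp [ha0]
    | succ n ih => rw [haS]; positivity
  have ha_R : ∀ n, a n ≤ R := by
    intro n; induction n with
    | zero => simpa [ha0] using hR0
    | succ n ih =>
      rw [haS]
      have hsq : (a n) ^ 2 ≤ R ^ 2 := by nlinarith [ha_nonneg n]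
      nlinarith [mul_pos hK hN]
  have ha_step : ∀ n, a n ≤ a (n + 1) := by
    intro n; induction n with
    | zero =>
      show a 0 ≤ a (0 + 1)
      rw [haS 0, ha0]; nlinarith
    | succ n ih =>
      show a (n + 1) ≤ a (n + 1 + 1)
      rw [haS (n + 1)]
      have h1 : a (n + 1) = Fs + K * N * (a n) ^ 2 := haS n
      have hsq : (a n) ^ 2 ≤ (a (n + 1)) ^ 2 := by nlinarith [ha_nonneg n, ha_nonneg (n+1)]
      have h2 : K * N * (a n) ^ 2 ≤ K * N * (a (n + 1)) ^ 2 :=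
        mul_le_mul_of_nonneg_left hsq (mul_pos hK hN).le
      linarith
  have ha_mono : Monotone a := monotone_nat_of_le_succ ha_step
  have hBdd : BddAbove (range a) := ⟨R, fun x hx => by obtain ⟨n, rfl⟩ := hx; exact ha_R n⟩
  set L : ℝ := ⨆ n, a n with hLdef
  have hLtend : Filter.Tendsto a Filter.atTop (nhds L) := tendsto_atTop_ciSup ha_mono hBdd
  have haL : ∀ n, a n ≤ L := fun n => le_ciSup hBdd n
  have hLR : L ≤ R := ciSup_le ha_R
  have hL0 : 0 ≤ L := le_trans (ha_nonneg 0) (haL 0)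
  -- elementary exponential facts
  have hexple : ∀ t : ℝ, 0 ≤ t → Real.exp (-(B * t)) ≤ 1 := fun t ht =>
    Real.exp_le_one_iff.mpr (neg_nonpos.mpr (mul_nonneg hB ht))
  -- continuity of ξ on [0, ∞)
  have hξc : ContinuousOn ξ (Ici 0) := by
    intro t₀ ht₀
    have ht₀' : (0:ℝ) ≤ t₀ := ht₀
    obtain ⟨M, hM⟩ := hξ (Icc 0 (t₀ + 1)) isCompact_Icc (fun x hx => hx.1)
    have hlip : LipschitzOnWith (Real.toNNReal M) ξ (Icc 0 (t₀ + 1)) := by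
      apply LipschitzOnWith.of_dist_le_mul
      intro x hx y hy
      calc dist (ξ x) (ξ y) = ‖ξ x - ξ y‖ := dist_eq_norm _ _
        _ ≤ M * |x - y| := hM x hx y hy
        _ ≤ (Real.toNNReal M) * dist x y := by
            rw [Real.dist_eq]
            exact mul_le_mul_of_nonneg_right (Real.le_coe_toNNReal M) (abs_nonneg _)
    have h1 : ContinuousWithinAt ξ (Icc 0 (t₀ + 1)) t₀ :=
      hlip.continuousOn t₀ ⟨ht₀', by linarith⟩
    apply h1.mono_of_mem_nhdsWithin
    have h2 : Iic (t₀ + 1) ∈ nhdsWithin t₀ (Ici (0:ℝ)) :=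
      mem_nhdsWithin_of_mem_nhds (Iic_mem_nhds (by linarith))
    have h3 := Filter.inter_mem h2 self_mem_nhdsWithin
    exact Filter.mem_of_superset h3 (fun x hx => ⟨hx.2, hx.1⟩)
  -- integrability of μm near 0
  obtain ⟨C, δ, hδ, hC⟩ := hμm_O
  have hσ1 : -1 < σ - 1 := by linarith [hσ.1]
  have hμm_intT : ∀ T : ℝ, IntegrableOn μm (Ioc 0 T) volume := by
    have hloc : IntegrableOn μm (Ioc 0 (δ/2)) volume := by
      have hrpow : IntervalIntegrable (fun u : ℝ => C * u ^ (σ - 1)) volume 0 (δ/2) :=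
        (intervalIntegral.intervalIntegrable_rpow' hσ1).const_mul C
      have hrpow' : IntegrableOn (fun u : ℝ => C * u ^ (σ - 1)) (Ioc 0 (δ/2)) volume :=
        (intervalIntegrable_iff_integrableOn_Ioc_of_le (by linarith)).mp hrpow
      apply Integrable.mono' hrpow'
      · exact (hμm_cont.mono (fun u hu => hu.1)).aestronglyMeasurable measurableSet_Ioc
      · filter_upwards [ae_restrict_mem measurableSet_Ioc] with u hu
        have hu0 : 0 < u := hu.1
        have huδ : u < δ := by linarith [hu.2]
        have h1 := hC u ⟨hu0, huδ⟩
        have h2 : C / u ^ (1 - σ) = C * u ^ (σ - 1) := by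
          rw [show (σ - 1 : ℝ) = -(1 - σ) by ring, Real.rpow_neg hu0.le]
          rw [div_eq_mul_inv]
        rw [Real.norm_eq_abs, abs_of_pos (hμm_pos u hu0)]
        rw [← h2]
        exact h1
    intro T
    rcases le_or_gt T (δ/2) with hT | hT
    · exact hloc.mono_set (Ioc_subset_Ioc le_rfl hT)
    · have hsplit : Ioc (0:ℝ) T = Ioc 0 (δ/2) ∪ Ioc (δ/2) T :=
        (Ioc_union_Ioc_eq_Ioc (by linarith) hT.le).symm
      rw [hsplit]
      apply IntegrableOn.union hloc
      have hcont : ContinuousOn μm (Icc (δ/2) T) :=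
        hμm_cont.mono (fun u hu => lt_of_lt_of_le (by linarith) hu.1)
      exact (hcont.integrableOn_Icc).mono_set Ioc_subset_Icc_self
  -- additivity of W
  have hWsub : ∀ t : ℝ, 0 < t → ∀ f g : Fm, W t f - W t g = W t (f - g) := by
    intro t ht f g
    apply hι_inj
    rw [map_sub, hW t ht, hW t ht, hW t ht, map_sub]
  -- MAIN INTEGRAL ESTIMATE
  have h_main : ∀ ψ : ℝ → Fm, ∀ c : ℝ, 0 ≤ c → ContinuousOn ψ (Ici 0) →
      (∀ s, 0 ≤ s → ‖ψ s‖ ≤ c * Real.exp (-(2 * B * s))) → ∀ t, 0 ≤ t →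
      IntervalIntegrable (fun s => W (t - s) (ψ s)) volume 0 t ∧
      ‖∫ s in (0:ℝ)..t, W (t - s) (ψ s)‖ ≤ N * c * Real.exp (-(B * t)) := by
    intro ψ c hc hψc hψb t ht
    rcases eq_or_lt_of_le ht with rfl | htpos
    · constructor
      · rw [intervalIntegrable_iff_integrableOn_Ioc_of_le le_rfl, Set.Ioc_self]
        exact integrableOn_empty
      · rw [intervalIntegral.integral_same]
        simp only [norm_zero]
        positivity
    · have hsubint : IntervalIntegrable (fun s => μm (t - s)) volume 0 t := by
        have h1 : IntervalIntegrable μm volume 0 t :=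
          (intervalIntegrable_iff_integrableOn_Ioc_of_le ht).mpr (hμm_intT t)
        have h2 := h1.comp_sub_left t
        simp only [sub_zero, sub_self] at h2
        exact h2.symm
      have hker : IntervalIntegrable (fun s => μm (t - s) * Real.exp (-(B * s))) volume 0 t :=
        hsubint.mul_continuousOn (Continuous.continuousOn (by fun_prop))
      have hm_ii : IntervalIntegrable
          (fun s => (c * Real.exp (-(B * t))) * (μm (t - s) * Real.exp (-(B * s)))) volume 0 t :=
        hker.const_mul _
      have hm_int : IntegrableOn
          (fun s => (c * Real.exp (-(B * t))) * (μm (t - s) * Real.exp (-(B * s)))) (Ioc 0 t) volume :=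
        (intervalIntegrable_iff_integrableOn_Ioc_of_le ht).mp hm_ii
      have hrwm : volume.restrict (Ioc (0:ℝ) t) = volume.restrict (Ioo (0:ℝ) t) :=
        Measure.restrict_congr_set Ioo_ae_eq_Ioc.symm
      have hmeas : AEStronglyMeasurable (fun s => W (t - s) (ψ s)) (volume.restrict (Ioc (0:ℝ) t)) := by
        rw [hrwm]
        have hcont : ContinuousOn (fun s => W (t - s) (ψ s)) (Ioo 0 t) := by
          have h1 : ContinuousOn (fun s : ℝ => ((ψ s, t - s) : Fm × ℝ)) (Ioo 0 t) :=
            (hψc.mono (fun s hs => le_of_lt hs.1)).prodMk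
              ((continuous_const.sub continuous_id).continuousOn)
          exact hWcont.comp h1
            (fun s hs => mk_mem_prod (mem_univ _) (by simp only [mem_Ioi]; linarith [hs.2]))
        exact hcont.aestronglyMeasurable measurableSet_Ioo
      have hbd : ∀ᵐ s ∂(volume.restrict (Ioc (0:ℝ) t)),
          ‖W (t - s) (ψ s)‖ ≤ (c * Real.exp (-(B * t))) * (μm (t - s) * Real.exp (-(B * s))) := by
        rw [hrwm]
        filter_upwards [ae_restrict_mem measurableSet_Ioo] with s hs
        have hts : 0 < t - s := by linarith [hs.2]
        have h1 := hμm_bd (t - s) hts (ψ s)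
        have h2 := hψb s hs.1.le
        have hμnn : 0 ≤ μm (t - s) := (hμm_pos _ hts).le
        have hexp : Real.exp (-(B * (t - s))) * Real.exp (-(2 * B * s))
            = Real.exp (-(B * t)) * Real.exp (-(B * s)) := by
          rw [← Real.exp_add, ← Real.exp_add]; ring_nf
        calc ‖W (t - s) (ψ s)‖ ≤ μm (t - s) * Real.exp (-(B * (t - s))) * ‖ψ s‖ := h1
          _ ≤ μm (t - s) * Real.exp (-(B * (t - s))) * (c * Real.exp (-(2 * B * s))) :=
              mul_le_mul_of_nonneg_left h2 (mul_nonneg hμnn (Real.exp_pos _).le)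
          _ = (c * Real.exp (-(B * t))) * (μm (t - s) * Real.exp (-(B * s))) := by
              rw [show μm (t - s) * Real.exp (-(B * (t - s))) * (c * Real.exp (-(2 * B * s)))
                  = c * (Real.exp (-(B * (t - s))) * Real.exp (-(2 * B * s))) * μm (t - s) by ring,
                hexp]
              ring
      have hInt : IntervalIntegrable (fun s => W (t - s) (ψ s)) volume 0 t := by
        rw [intervalIntegrable_iff_integrableOn_Ioc_of_le ht]
        exact Integrable.mono' hm_int hmeas hbd
      refine ⟨hInt, ?_⟩
      have hle1 : ‖∫ s in (0:ℝ)..t, W (t - s) (ψ s)‖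
          ≤ ∫ s in (0:ℝ)..t, (c * Real.exp (-(B * t))) * (μm (t - s) * Real.exp (-(B * s))) := by
        rw [intervalIntegral.integral_of_le ht, intervalIntegral.integral_of_le ht]
        exact norm_integral_le_of_norm_le hm_int hbd
      have hle2 : (∫ s in (0:ℝ)..t, (c * Real.exp (-(B * t))) * (μm (t - s) * Real.exp (-(B * s))))
          ≤ (c * Real.exp (-(B * t))) * N := by
        rw [intervalIntegral.integral_const_mul]
        exact mul_le_mul_of_nonneg_left (hμm_N t ht) (by positivity)
      calc ‖∫ s in (0:ℝ)..t, W (t - s) (ψ s)‖ ≤ (c * Real.exp (-(B * t))) * N :=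
            le_trans hle1 hle2
        _ = N * c * Real.exp (-(B * t)) := by ring
  -- CONTINUITY OF THE INTEGRAL OPERATOR
  have h_contI : ∀ ψ : ℝ → Fm, ∀ c : ℝ, 0 ≤ c → ContinuousOn ψ (Ici 0) →
      (∀ s, 0 ≤ s → ‖ψ s‖ ≤ c * Real.exp (-(2 * B * s))) →
      ContinuousOn (fun t => ∫ s in (0:ℝ)..t, W (t - s) (ψ s)) (Ici 0) := by
    intro ψ c hc hψc hψb t₀ ht₀
    have ht₀' : (0:ℝ) ≤ t₀ := ht₀
    set T : ℝ := t₀ + 1 with hT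
    set Ff : ℝ → ℝ → F := fun t u => Set.indicator (Ioo 0 t) (fun u => W u (ψ (t - u))) u with hFf
    have hrep : ∀ t, 0 ≤ t → t ≤ T →
        (∫ s in (0:ℝ)..t, W (t - s) (ψ s)) = ∫ u in Ioc (0:ℝ) T, Ff t u := by
      intro t ht htT
      have h1 : (∫ s in (0:ℝ)..t, W (t - s) (ψ s)) = ∫ u in (0:ℝ)..t, W u (ψ (t - u)) := by
        have h0 := intervalIntegral.integral_comp_sub_left
          (a := (0:ℝ)) (b := t) (fun u => W u (ψ (t - u))) t
        simp only [sub_sub_cancel, sub_self, sub_zero] at h0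
        exact h0
      have h2 : (∫ u in Ioc (0:ℝ) T, Ff t u)
          = ∫ u in Ioc (0:ℝ) T ∩ Ioo (0:ℝ) t, W u (ψ (t - u)) :=
        setIntegral_indicator measurableSet_Ioo
      have h3 : Ioc (0:ℝ) T ∩ Ioo (0:ℝ) t = Ioo (0:ℝ) t :=
        inter_eq_self_of_subset_right (fun u hu => ⟨hu.1, le_trans hu.2.le htT⟩)
      have h4 : (∫ u in Ioo (0:ℝ) t, W u (ψ (t - u))) = ∫ u in Ioc (0:ℝ) t, W u (ψ (t - u)) :=
        setIntegral_congr_set Ioo_ae_eq_Ioc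
      rw [h1, intervalIntegral.integral_of_le ht, h2, h3, h4]
    have hfilter : ∀ᶠ t in nhdsWithin t₀ (Ici (0:ℝ)), 0 ≤ t ∧ t ≤ T := by
      have h1 : ∀ᶠ t in nhdsWithin t₀ (Ici (0:ℝ)), t ≤ T :=
        mem_nhdsWithin_of_mem_nhds (Filter.mem_of_superset
          (Iic_mem_nhds (by rw [hT]; linarith)) (fun x hx => hx))
      filter_upwards [h1, self_mem_nhdsWithin] with t h1' h2'
      exact ⟨h2', h1'⟩
    have key : ContinuousWithinAt (fun t => ∫ u in Ioc (0:ℝ) T, Ff t u) (Ici 0) t₀ := by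
      apply continuousWithinAt_of_dominated (bound := fun u => c * μm u)
      · filter_upwards [hfilter] with t hht
        show AEStronglyMeasurable ((Ioo 0 t).indicator fun u => W u (ψ (t - u)))
          (volume.restrict (Ioc (0:ℝ) T))
        rw [aestronglyMeasurable_indicator_iff measurableSet_Ioo]
        have hsub2 : Ioo (0:ℝ) t ⊆ Ioc (0:ℝ) T := fun u hu => ⟨hu.1, le_trans hu.2.le hht.2⟩
        have hmm : (volume.restrict (Ioc (0:ℝ) T)).restrict (Ioo (0:ℝ) t)
            = volume.restrict (Ioo (0:ℝ) t) := by
          rw [Measure.restrict_restrict measurableSet_Ioo, inter_eq_self_of_subset_left hsub2]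
        rw [hmm]
        have hcont : ContinuousOn (fun u => W u (ψ (t - u))) (Ioo 0 t) := by
          have h1 : ContinuousOn (fun u : ℝ => ((ψ (t - u), u) : Fm × ℝ)) (Ioo 0 t) := by
            apply ContinuousOn.prodMk
            · exact hψc.comp ((continuous_const.sub continuous_id).continuousOn)
                (fun u hu => by simp only [mem_Ici]; linarith [hu.2])
            · exact continuousOn_id
          exact hWcont.comp h1 (fun u hu => mk_mem_prod (mem_univ _) hu.1)
        exact hcont.aestronglyMeasurable measurableSet_Ioo
      · filter_upwards [hfilter] with t hht
        filter_upwards [ae_restrict_mem measurableSet_Ioc] with u hu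
        show ‖(Ioo 0 t).indicator (fun u => W u (ψ (t - u))) u‖ ≤ c * μm u
        by_cases hu' : u ∈ Ioo (0:ℝ) t
        · rw [indicator_of_mem hu']
          have h1 := hμm_bd u hu.1 (ψ (t - u))
          have htu : 0 ≤ t - u := by linarith [hu'.2]
          have h2 := hψb (t - u) htu
          have he1 : Real.exp (-(B * u)) ≤ 1 :=
            Real.exp_le_one_iff.mpr (neg_nonpos.mpr (mul_nonneg hB hu.1.le))
          have he2 : Real.exp (-(2 * B * (t - u))) ≤ 1 :=
            Real.exp_le_one_iff.mpr (neg_nonpos.mpr (mul_nonneg (by linarith) htu))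
          have hμpos := hμm_pos u hu.1
          calc ‖W u (ψ (t - u))‖ ≤ μm u * Real.exp (-(B * u)) * ‖ψ (t - u)‖ := h1
            _ ≤ μm u * Real.exp (-(B * u)) * (c * Real.exp (-(2 * B * (t - u)))) :=
                mul_le_mul_of_nonneg_left h2 (mul_nonneg hμpos.le (Real.exp_pos _).le)
            _ ≤ c * μm u := by
                have hee : Real.exp (-(B * u)) * Real.exp (-(2 * B * (t - u))) ≤ 1 := by
                  nlinarith [Real.exp_pos (-(B * u)), Real.exp_pos (-(2 * B * (t - u)))]
                calc μm u * Real.exp (-(B * u)) * (c * Real.exp (-(2 * B * (t - u))))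
                    = c * μm u * (Real.exp (-(B * u)) * Real.exp (-(2 * B * (t - u)))) := by ring
                  _ ≤ c * μm u * 1 :=
                      mul_le_mul_of_nonneg_left hee (mul_nonneg hc hμpos.le)
                  _ = c * μm u := mul_one _
        · rw [indicator_of_notMem hu']
          simp only [norm_zero]
          exact mul_nonneg hc (hμm_pos u hu.1).le
      · exact (hμm_intT T).const_mul c
      · have hne : ∀ᵐ u ∂(volume.restrict (Ioc (0:ℝ) T)), u ≠ t₀ := by
          apply ae_restrict_of_ae
          rw [MeasureTheory.ae_iff]
          have hset : {u : ℝ | ¬ u ≠ t₀} = {t₀} := by ext u; simp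
          rw [hset]
          exact measure_singleton t₀
        filter_upwards [ae_restrict_mem measurableSet_Ioc, hne] with u hu hut₀
        rcases lt_or_gt_of_ne hut₀ with hlt | hgt
        · -- u < t₀
          have hev : ∀ᶠ t in nhdsWithin t₀ (Ici (0:ℝ)), Ff t u = W u (ψ (t - u)) := by
            apply mem_nhdsWithin_of_mem_nhds
            filter_upwards [eventually_gt_nhds hlt] with t htu
            exact indicator_of_mem (show u ∈ Ioo (0:ℝ) t from ⟨hu.1, htu⟩) _
          have hψat : ContinuousAt ψ (t₀ - u) :=
            hψc.continuousAt (Ici_mem_nhds (by linarith))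
          have hWat : ContinuousAt (fun p : Fm × ℝ => W p.2 p.1) ((ψ (t₀ - u), u) : Fm × ℝ) :=
            hWcont.continuousAt ((isOpen_univ.prod isOpen_Ioi).mem_nhds ⟨trivial, hu.1⟩)
          have hgc : ContinuousAt (fun t : ℝ => W u (ψ (t - u))) t₀ := by
            have hsub : ContinuousAt (fun t : ℝ => t - u) t₀ := by fun_prop
            have h1 : ContinuousAt (fun t : ℝ => ψ (t - u)) t₀ :=
              ContinuousAt.comp (f := fun t : ℝ => t - u) hψat hsub
            have h2 : ContinuousAt (fun t : ℝ => ((ψ (t - u), u) : Fm × ℝ)) t₀ :=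
              h1.prodMk continuousAt_const
            exact ContinuousAt.comp (f := fun t : ℝ => ((ψ (t - u), u) : Fm × ℝ)) hWat h2
          exact hgc.continuousWithinAt.congr_of_eventuallyEq hev
            (indicator_of_mem (show u ∈ Ioo (0:ℝ) t₀ from ⟨hu.1, hlt⟩) _)
        · -- t₀ < u
          have hnotmem : ∀ t : ℝ, t ≤ u → u ∉ Ioo (0:ℝ) t := fun t htu hmem =>
            absurd hmem.2 (not_lt.mpr htu)
          have hev : ∀ᶠ t in nhdsWithin t₀ (Ici (0:ℝ)), Ff t u = 0 := by
            apply mem_nhdsWithin_of_mem_nhds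
            filter_upwards [eventually_lt_nhds hgt] with t htu
            exact indicator_of_notMem (hnotmem t htu.le) _
          exact continuousWithinAt_const.congr_of_eventuallyEq hev
            (indicator_of_notMem (hnotmem t₀ hgt.le) _)
    exact key.congr_of_eventuallyEq
      (by filter_upwards [hfilter] with t hht; exact hrep t hht.1 hht.2)
      (hrep t₀ ht₀' (by rw [hT]; linarith))
  -- the nonlinearity ψf
  have hψ_prop : ∀ (φ : ℝ → F) (aa : ℝ), 0 ≤ aa → ContinuousOn φ (Ici 0) →
      (∀ t, 0 ≤ t → ‖φ t‖ ≤ aa * Real.exp (-(B * t))) →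
      ContinuousOn (fun s => ((PP (φ s)) (φ s) + ξ s : Fm)) (Ici 0) ∧
      ∀ s, 0 ≤ s → ‖(PP (φ s)) (φ s) + ξ s‖ ≤ (K * aa ^ 2 + J) * Real.exp (-(2 * B * s)) := by
    intro φ aa haa hφc hφb
    constructor
    · have hpair : ContinuousOn (fun s => ((φ s, φ s) : F × F)) (Ici (0:ℝ)) := hφc.prodMk hφc
      exact (PP.continuous₂.comp_continuousOn hpair).add hξc
    · intro s hs
      have hx := hφb s hs
      have hxn := norm_nonneg (φ s)
      have he : Real.exp (-(B * s)) * Real.exp (-(B * s)) = Real.exp (-(2 * B * s)) := by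
        rw [← Real.exp_add]; ring_nf
      calc ‖(PP (φ s)) (φ s) + ξ s‖ ≤ ‖(PP (φ s)) (φ s)‖ + ‖ξ s‖ := norm_add_le _ _
        _ ≤ K * ‖φ s‖ * ‖φ s‖ + J * Real.exp (-(2 * B * s)) := add_le_add (hPP _ _) (hξb s hs)
        _ ≤ (K * aa ^ 2 + J) * Real.exp (-(2 * B * s)) := by
            have hmul : ‖φ s‖ * ‖φ s‖ ≤ (aa * Real.exp (-(B * s))) * (aa * Real.exp (-(B * s))) :=
              mul_le_mul hx hx hxn (by positivity)
            have hmul2 : ‖φ s‖ * ‖φ s‖ ≤ aa ^ 2 * Real.exp (-(2 * B * s)) := by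
              calc ‖φ s‖ * ‖φ s‖
                  ≤ (aa * Real.exp (-(B * s))) * (aa * Real.exp (-(B * s))) := hmul
                _ = aa ^ 2 * (Real.exp (-(B * s)) * Real.exp (-(B * s))) := by ring
                _ = aa ^ 2 * Real.exp (-(2 * B * s)) := by rw [he]
            nlinarith [mul_le_mul_of_nonneg_left hmul2 hK.le]
  -- continuity of t ↦ V t f₀
  have hVfc : ContinuousOn (fun t => V t f₀) (Ici (0:ℝ)) := by
    have h1 : ContinuousOn (fun t : ℝ => ((f₀, t) : F × ℝ)) (Ici 0) :=
      (continuous_const.prodMk continuous_id).continuousOn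
    exact hVcont.comp h1 (fun t ht => ⟨trivial, ht⟩)
  -- the Picard iterates
  let φseq : ℕ → ℝ → F := fun n => Nat.rec (fun _ => (0:F))
    (fun _ φ => fun t => V t f₀ + ∫ s in (0:ℝ)..t, W (t - s) ((PP (φ s)) (φ s) + ξ s)) n
  have hφseqS : ∀ n, φseq (n + 1)
      = fun t => V t f₀ + ∫ s in (0:ℝ)..t, W (t - s) ((PP (φseq n s)) (φseq n s) + ξ s) :=
    fun n => rfl
  -- invariants
  have hPc : ∀ n, ContinuousOn (φseq n) (Ici 0) ∧
      ∀ t, 0 ≤ t → ‖φseq n t‖ ≤ a n * Real.exp (-(B * t)) := by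
    intro n; induction n with
    | zero =>
      refine ⟨continuousOn_const, fun t ht => ?_⟩
      have h0 : φseq 0 t = (0:F) := rfl
      rw [h0, ha0]
      simp
    | succ n ih =>
      obtain ⟨ihc, ihb⟩ := ih
      obtain ⟨hψcont, hψbd⟩ := hψ_prop (φseq n) (a n) (ha_nonneg n) ihc ihb
      have hcc : 0 ≤ K * (a n) ^ 2 + J := by positivity
      constructor
      · rw [hφseqS n]
        exact hVfc.add (h_contI _ _ hcc hψcont hψbd)
      · intro t ht
        rw [hφseqS n]
        have h1 := hu_bd t ht f₀
        have h2 := (h_main _ _ hcc hψcont hψbd t ht).2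
        have h3 : Real.exp (-(B * t)) * ‖f₀‖ + N * (K * (a n) ^ 2 + J) * Real.exp (-(B * t))
            = (Fs + K * N * (a n) ^ 2) * Real.exp (-(B * t)) := by rw [hFs]; ring
        calc ‖V t f₀ + ∫ s in (0:ℝ)..t, W (t - s) ((PP (φseq n s)) (φseq n s) + ξ s)‖
            ≤ ‖V t f₀‖ + ‖∫ s in (0:ℝ)..t, W (t - s) ((PP (φseq n s)) (φseq n s) + ξ s)‖ :=
              norm_add_le _ _
          _ ≤ (Fs + K * N * (a n) ^ 2) * Real.exp (-(B * t)) := by rw [← h3]; linarith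
          _ = a (n + 1) * Real.exp (-(B * t)) := by rw [haS]
  -- the difference estimate for one application of the Picard operator
  have hdiff : ∀ (φ φ' : ℝ → F) (aa aa' d : ℝ), 0 ≤ aa → 0 ≤ aa' → 0 ≤ d →
      ContinuousOn φ (Ici 0) → ContinuousOn φ' (Ici 0) →
      (∀ t, 0 ≤ t → ‖φ t‖ ≤ aa * Real.exp (-(B * t))) →
      (∀ t, 0 ≤ t → ‖φ' t‖ ≤ aa' * Real.exp (-(B * t))) →
      (∀ t, 0 ≤ t → ‖φ t - φ' t‖ ≤ d * Real.exp (-(B * t))) →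
      ∀ t, 0 ≤ t →
      ‖(V t f₀ + ∫ s in (0:ℝ)..t, W (t - s) ((PP (φ s)) (φ s) + ξ s)) -
        (V t f₀ + ∫ s in (0:ℝ)..t, W (t - s) ((PP (φ' s)) (φ' s) + ξ s))‖
        ≤ K * N * (aa + aa') * d * Real.exp (-(B * t)) := by
    intro φ φ' aa aa' d haa haa' hd hφc hφ'c hφb hφ'b hdist t ht
    obtain ⟨hψcont, hψbd⟩ := hψ_prop φ aa haa hφc hφb
    obtain ⟨hψcont', hψbd'⟩ := hψ_prop φ' aa' haa' hφ'c hφ'b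
    -- the difference nonlinearity
    set ψδ : ℝ → Fm := fun s => ((PP (φ s)) (φ s) + ξ s) - ((PP (φ' s)) (φ' s) + ξ s) with hψδ
    have hψδc : ContinuousOn ψδ (Ici 0) := hψcont.sub hψcont'
    have hcδ : 0 ≤ K * (aa + aa') * d := by positivity
    have hψδb : ∀ s, 0 ≤ s → ‖ψδ s‖ ≤ (K * (aa + aa') * d) * Real.exp (-(2 * B * s)) := by
      intro s hs
      have hdecomp : ψδ s = (PP (φ s)) (φ s - φ' s) + (PP (φ s - φ' s)) (φ' s) := by
        rw [hψδ]
        simp only [map_sub, ContinuousLinearMap.sub_apply]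
        abel
      have he : Real.exp (-(B * s)) * Real.exp (-(B * s)) = Real.exp (-(2 * B * s)) := by
        rw [← Real.exp_add]; ring_nf
      have h1 := hPP (φ s) (φ s - φ' s)
      have h2 := hPP (φ s - φ' s) (φ' s)
      have hb1 := hφb s hs
      have hb2 := hφ'b s hs
      have hb3 := hdist s hs
      have hn1 := norm_nonneg (φ s)
      have hn2 := norm_nonneg (φ' s)
      have hn3 := norm_nonneg (φ s - φ' s)
      have hep := Real.exp_pos (-(B * s))
      rw [hdecomp]
      calc ‖(PP (φ s)) (φ s - φ' s) + (PP (φ s - φ' s)) (φ' s)‖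
          ≤ ‖(PP (φ s)) (φ s - φ' s)‖ + ‖(PP (φ s - φ' s)) (φ' s)‖ := norm_add_le _ _
        _ ≤ K * ‖φ s‖ * ‖φ s - φ' s‖ + K * ‖φ s - φ' s‖ * ‖φ' s‖ := add_le_add h1 h2
        _ ≤ (K * (aa + aa') * d) * Real.exp (-(2 * B * s)) := by
            have hm1 : ‖φ s‖ * ‖φ s - φ' s‖
                ≤ (aa * Real.exp (-(B * s))) * (d * Real.exp (-(B * s))) :=
              mul_le_mul hb1 hb3 hn3 (by positivity)
            have hm2 : ‖φ s - φ' s‖ * ‖φ' s‖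
                ≤ (d * Real.exp (-(B * s))) * (aa' * Real.exp (-(B * s))) :=
              mul_le_mul hb3 hb2 hn2 (by positivity)
            nlinarith [hK.le, Real.exp_pos (-(2 * B * s))]
    have hI1 := (h_main _ _ (by positivity : (0:ℝ) ≤ K * aa ^ 2 + J) hψcont hψbd t ht).1
    have hI2 := (h_main _ _ (by positivity : (0:ℝ) ≤ K * aa' ^ 2 + J) hψcont' hψbd' t ht).1
    have hIδ := h_main _ _ hcδ hψδc hψδb t ht
    have heq : (V t f₀ + ∫ s in (0:ℝ)..t, W (t - s) ((PP (φ s)) (φ s) + ξ s)) -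
        (V t f₀ + ∫ s in (0:ℝ)..t, W (t - s) ((PP (φ' s)) (φ' s) + ξ s))
        = ∫ s in (0:ℝ)..t, W (t - s) (ψδ s) := by
      rw [add_sub_add_left_eq_sub, ← intervalIntegral.integral_sub hI1 hI2]
      apply intervalIntegral.integral_congr_ae
      have hne : ∀ᵐ s : ℝ ∂volume, s ≠ t := by
        rw [MeasureTheory.ae_iff]
        have hset : {u : ℝ | ¬ u ≠ t} = {t} := by ext u; simp
        rw [hset]
        exact measure_singleton t
      filter_upwards [hne] with s hsne hs
      rw [uIoc_of_le ht] at hs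
      have hts : 0 < t - s := by
        rcases lt_or_eq_of_le hs.2 with h | h
        · linarith
        · exact absurd h hsne
      exact hWsub (t - s) hts _ _
    rw [heq]
    calc ‖∫ s in (0:ℝ)..t, W (t - s) (ψδ s)‖
        ≤ N * (K * (aa + aa') * d) * Real.exp (-(B * t)) := hIδ.2
      _ = K * N * (aa + aa') * d * Real.exp (-(B * t)) := by ring
  -- successive differences
  have hd : ∀ n, ∀ t, 0 ≤ t →
      ‖φseq (n + 1) t - φseq n t‖ ≤ (a (n + 1) - a n) * Real.exp (-(B * t)) := by
    intro n; induction n with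
    | zero =>
      intro t ht
      have h0 : φseq 0 t = (0:F) := rfl
      rw [h0, sub_zero, ha0, sub_zero]
      exact (hPc 1).2 t ht
    | succ n ih =>
      intro t ht
      have hstep := hdiff (φseq (n + 1)) (φseq n) (a (n + 1)) (a n) (a (n + 1) - a n)
        (ha_nonneg (n + 1)) (ha_nonneg n) (by linarith [ha_mono (Nat.le_succ n)])
        (hPc (n + 1)).1 (hPc n).1 ((hPc (n + 1)).2) ((hPc n).2) ih t ht
      rw [hφseqS (n + 1), hφseqS n]
      have halg : K * N * (a (n + 1) + a n) * (a (n + 1) - a n) = a (n + 2) - a (n + 1) := by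
        rw [haS (n + 1), haS n]; ring
      calc ‖(fun t => V t f₀ + ∫ s in (0:ℝ)..t, W (t - s) ((PP (φseq (n+1) s)) (φseq (n+1) s) + ξ s)) t
            - (fun t => V t f₀ + ∫ s in (0:ℝ)..t, W (t - s) ((PP (φseq n s)) (φseq n s) + ξ s)) t‖
          ≤ K * N * (a (n + 1) + a n) * (a (n + 1) - a n) * Real.exp (-(B * t)) := hstep
        _ = (a (n + 2) - a (n + 1)) * Real.exp (-(B * t)) := by rw [halg]
  -- telescoping
  have hdk : ∀ n m, n ≤ m → ∀ t, 0 ≤ t →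
      ‖φseq m t - φseq n t‖ ≤ (a m - a n) * Real.exp (-(B * t)) := by
    intro n m hnm
    obtain ⟨k, rfl⟩ := Nat.le.dest hnm
    induction k with
    | zero =>
      intro t ht
      simp
    | succ k ih =>
      intro t ht
      have h1 := ih (Nat.le_add_right n k) t ht
      have h2 := hd (n + k) t ht
      have htri : ‖φseq (n + (k+1)) t - φseq n t‖
          ≤ ‖φseq (n + k + 1) t - φseq (n + k) t‖ + ‖φseq (n + k) t - φseq n t‖ := by
        rw [show n + (k + 1) = n + k + 1 by ring]
        exact norm_sub_le_norm_sub_add_norm_sub _ _ _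
      have : a (n + (k + 1)) = a (n + k + 1) := by rw [show n + (k+1) = n + k + 1 by ring]
      rw [this]
      calc ‖φseq (n + (k+1)) t - φseq n t‖
          ≤ ‖φseq (n + k + 1) t - φseq (n + k) t‖ + ‖φseq (n + k) t - φseq n t‖ := htri
        _ ≤ (a (n + k + 1) - a (n + k)) * Real.exp (-(B * t))
            + (a (n + k) - a n) * Real.exp (-(B * t)) := add_le_add h2 h1
        _ = (a (n + k + 1) - a n) * Real.exp (-(B * t)) := by ring
  -- Cauchy and limit
  have hcauchy : ∀ t, 0 ≤ t → CauchySeq (fun n => φseq n t) := by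
    intro t ht
    apply cauchySeq_of_le_tendsto_0 (fun n => L - a n)
    · intro n m N' hn hm
      rcases le_total n m with h | h
      · calc dist (φseq n t) (φseq m t) = ‖φseq m t - φseq n t‖ := by
              rw [dist_eq_norm, norm_sub_rev]
          _ ≤ (a m - a n) * Real.exp (-(B * t)) := hdk n m h t ht
          _ ≤ (a m - a n) * 1 := by
              apply mul_le_mul_of_nonneg_left (hexple t ht)
              linarith [ha_mono h]
          _ ≤ L - a N' := by
              have := haL m
              have := ha_mono hn
              linarith
      · calc dist (φseq n t) (φseq m t) = ‖φseq n t - φseq m t‖ := by rw [dist_eq_norm]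
          _ ≤ (a n - a m) * Real.exp (-(B * t)) := hdk m n h t ht
          _ ≤ (a n - a m) * 1 := by
              apply mul_le_mul_of_nonneg_left (hexple t ht)
              linarith [ha_mono h]
          _ ≤ L - a N' := by
              have := haL n
              have := ha_mono hm
              linarith
    · have h0 : Filter.Tendsto (fun n => L - a n) Filter.atTop (nhds (L - L)) :=
        Filter.Tendsto.sub tendsto_const_nhds hLtend
      simpa using h0
  set φ : ℝ → F := fun t => Filter.limUnder Filter.atTop (fun n => φseq n t) with hφdef
  have hφt : ∀ t, 0 ≤ t → Filter.Tendsto (fun n => φseq n t) Filter.atTop (nhds (φ t)) :=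
    fun t ht => (hcauchy t ht).tendsto_limUnder
  -- distance to iterates
  have hφd : ∀ n t, 0 ≤ t → ‖φ t - φseq n t‖ ≤ (L - a n) * Real.exp (-(B * t)) := by
    intro n t ht
    have htd : Filter.Tendsto (fun m => ‖φseq m t - φseq n t‖) Filter.atTop
        (nhds ‖φ t - φseq n t‖) :=
      (Filter.Tendsto.sub (hφt t ht) tendsto_const_nhds).norm
    apply le_of_tendsto htd
    filter_upwards [Filter.eventually_ge_atTop n] with m hm
    calc ‖φseq m t - φseq n t‖ ≤ (a m - a n) * Real.exp (-(B * t)) := hdk n m hm t ht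
      _ ≤ (L - a n) * Real.exp (-(B * t)) := by
          apply mul_le_mul_of_nonneg_right _ (Real.exp_pos _).le
          linarith [haL m]
  -- bound on the limit
  have hφb : ∀ t, 0 ≤ t → ‖φ t‖ ≤ L * Real.exp (-(B * t)) := by
    intro t ht
    apply le_of_tendsto (hφt t ht).norm
    filter_upwards with n
    calc ‖φseq n t‖ ≤ a n * Real.exp (-(B * t)) := (hPc n).2 t ht
      _ ≤ L * Real.exp (-(B * t)) :=
          mul_le_mul_of_nonneg_right (haL n) (Real.exp_pos _).le
  -- continuity of the limit by uniform convergence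
  have hφc : ContinuousOn φ (Ici 0) := by
    have hTU : TendstoUniformlyOn (fun n t => φseq n t) φ Filter.atTop (Ici 0) := by
      rw [Metric.tendstoUniformlyOn_iff]
      intro ε hε
      have h1 : Filter.Tendsto (fun n => L - a n) Filter.atTop (nhds 0) := by
        have h0 : Filter.Tendsto (fun n => L - a n) Filter.atTop (nhds (L - L)) :=
          Filter.Tendsto.sub tendsto_const_nhds hLtend
        simpa using h0
      filter_upwards [h1.eventually_lt_const hε] with n hn t ht
      have h2 : dist (φ t) (φseq n t) = ‖φ t - φseq n t‖ := dist_eq_norm _ _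
      rw [h2]
      calc ‖φ t - φseq n t‖ ≤ (L - a n) * Real.exp (-(B * t)) := hφd n t ht
        _ ≤ (L - a n) * 1 := mul_le_mul_of_nonneg_left (hexple t ht) (by linarith [haL n])
        _ < ε := by linarith
    exact hTU.continuousOn (Filter.Frequently.of_forall fun n => (hPc n).1)
  -- the fixed-point property
  have hfix : ∀ t, 0 ≤ t →
      φ t = V t f₀ + ∫ s in (0:ℝ)..t, W (t - s) ((PP (φ s)) (φ s) + ξ s) := by
    intro t ht
    have hlim1 : Filter.Tendsto (fun n => φseq (n + 1) t) Filter.atTop (nhds (φ t)) :=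
      (hφt t ht).comp (Filter.tendsto_add_atTop_nat 1)
    have hlim2 : Filter.Tendsto (fun n => φseq (n + 1) t) Filter.atTop
        (nhds (V t f₀ + ∫ s in (0:ℝ)..t, W (t - s) ((PP (φ s)) (φ s) + ξ s))) := by
      rw [tendsto_iff_dist_tendsto_zero]
      apply squeeze_zero (fun n => dist_nonneg)
        (g := fun n => K * N * 2 * R * (L - a n))
      · intro n
        have hstep := hdiff (φseq n) φ (a n) L (L - a n)
          (ha_nonneg n) hL0 (by linarith [haL n])
          (hPc n).1 hφc ((hPc n).2) hφb
          (fun s hs => by rw [norm_sub_rev]; exact hφd n s hs) t ht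
        rw [hφseqS n]
        have h2 : dist
            ((fun t => V t f₀ + ∫ s in (0:ℝ)..t, W (t - s) ((PP (φseq n s)) (φseq n s) + ξ s)) t)
            (V t f₀ + ∫ s in (0:ℝ)..t, W (t - s) ((PP (φ s)) (φ s) + ξ s)) =
            ‖(V t f₀ + ∫ s in (0:ℝ)..t, W (t - s) ((PP (φseq n s)) (φseq n s) + ξ s)) -
            (V t f₀ + ∫ s in (0:ℝ)..t, W (t - s) ((PP (φ s)) (φ s) + ξ s))‖ := dist_eq_norm _ _
        rw [h2]
        calc ‖(V t f₀ + ∫ s in (0:ℝ)..t, W (t - s) ((PP (φseq n s)) (φseq n s) + ξ s)) -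
            (V t f₀ + ∫ s in (0:ℝ)..t, W (t - s) ((PP (φ s)) (φ s) + ξ s))‖
            ≤ K * N * (a n + L) * (L - a n) * Real.exp (-(B * t)) := hstep
          _ ≤ K * N * 2 * R * (L - a n) := by
              have hKN := mul_pos hK hN
              have h3 := hexple t ht
              have h4 : a n + L ≤ 2 * R := by linarith [ha_R n, hLR]
              have h5 : 0 ≤ L - a n := by linarith [haL n]
              have h7 : 0 ≤ a n + L := by linarith [ha_nonneg n, hL0]
              have h8 : 0 ≤ K * N * (a n + L) * (L - a n) :=
                mul_nonneg (mul_nonneg hKN.le h7) h5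
              calc K * N * (a n + L) * (L - a n) * Real.exp (-(B * t))
                  ≤ K * N * (a n + L) * (L - a n) * 1 :=
                    mul_le_mul_of_nonneg_left h3 h8
                _ = K * N * ((a n + L) * (L - a n)) := by ring
                _ ≤ K * N * (2 * R * (L - a n)) :=
                    mul_le_mul_of_nonneg_left (mul_le_mul_of_nonneg_right h4 h5) hKN.le
                _ = K * N * 2 * R * (L - a n) := by ring
      · have h0 : Filter.Tendsto (fun n => K * N * 2 * R * (L - a n)) Filter.atTop
            (nhds (K * N * 2 * R * (L - L))) :=
          (Filter.Tendsto.sub tendsto_const_nhds hLtend).const_mul _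
        simpa using h0
    exact tendsto_nhds_unique hlim1 hlim2
  refine ⟨φ, hφc, fun t ht => hfix t ht, fun t ht => ?_⟩
  calc ‖φ t‖ ≤ L * Real.exp (-(B * t)) := hφb t ht
    _ ≤ R * Real.exp (-(B * t)) := mul_le_mul_of_nonneg_right hLR (Real.exp_pos _).le
    _ = Fs * XX (4 * K * N * Fs) * Real.exp (-(B * t)) := by rw [hRdef]
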